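/- Let A be an n×n positive matrix with n distinct eigenvalues, and let B₁,...,B_k be positive n×n matrices with AB_i ≥ B_iA entrywise for each i. Then the family {A, B₁, ..., B_k} is simultaneously triangularizable (there is an invertible matrix T such that T⁻¹AT and each T⁻¹B_iT are upper triangular). -/

import Mathlib

set_option maxHeartbeats 1000000

open Matrix

namespace Stmt18

variable {n k : ℕ}

/-- entrywise nonneg -/
def NN (X : Matrix (Fin n) (Fin n) ℝ) : Prop := ∀ i j, 0 ≤ X i j
/-- entrywise le -/
def MLE (X Y : Matrix (Fin n) (Fin n) ℝ) : Prop := ∀ i j, X i j ≤ Y i j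

lemma MLE.rfl {X : Matrix (Fin n) (Fin n) ℝ} : MLE X X := fun _ _ => le_rfl

lemma NN.mul {X Y : Matrix (Fin n) (Fin n) ℝ} (hX : NN X) (hY : NN Y) : NN (X * Y) := by
  intro i j
  rw [Matrix.mul_apply]
  exact Finset.sum_nonneg fun l _ => mul_nonneg (hX i l) (hY l j)

lemma NN.one : NN (1 : Matrix (Fin n) (Fin n) ℝ) := by
  intro i j
  rw [Matrix.one_apply]
  split <;> norm_num

lemma NN.pow {X : Matrix (Fin n) (Fin n) ℝ} (hX : NN X) : ∀ m, NN (X ^ m) := by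
  intro m
  induction m with
  | zero => simpa using NN.one
  | succ m ih => rw [pow_succ]; exact ih.mul hX

lemma MLE.mul {X X' Y Y' : Matrix (Fin n) (Fin n) ℝ} (hX : NN X) (hY : NN Y)
    (h1 : MLE X X') (h2 : MLE Y Y') : MLE (X * Y) (X' * Y') := by
  intro i j
  rw [Matrix.mul_apply, Matrix.mul_apply]
  refine Finset.sum_le_sum fun l _ => mul_le_mul (h1 i l) (h2 l j) (hY l j) ?_
  exact le_trans (hX i l) (h1 i l)

lemma MLE.trans {X Y Z : Matrix (Fin n) (Fin n) ℝ} (h1 : MLE X Y) (h2 : MLE Y Z) : MLE X Z :=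
  fun i j => le_trans (h1 i j) (h2 i j)

scoped infix:50 " ≼ " => MLE

instance : Trans (MLE (n := n)) (MLE (n := n)) (MLE (n := n)) := ⟨MLE.trans⟩
instance : Trans (MLE (n := n)) (Eq (α := Matrix (Fin n) (Fin n) ℝ)) (MLE (n := n)) :=
  ⟨fun h e => e ▸ h⟩
instance : Trans (Eq (α := Matrix (Fin n) (Fin n) ℝ)) (MLE (n := n)) (MLE (n := n)) :=
  ⟨fun e h => e ▸ h⟩

section Words

variable (A : Matrix (Fin n) (Fin n) ℝ) (B : Fin k → Matrix (Fin n) (Fin n) ℝ)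

/-- the interleaved word A^* B A^* B ... -/
noncomputable def wordM {R : Type*} [CommRing R] (A : Matrix (Fin n) (Fin n) R)
    (B : Fin k → Matrix (Fin n) (Fin n) R) :
    (t : ℕ) → (Fin t → Fin k) → (Fin t → ℕ) → Matrix (Fin n) (Fin n) R
  | 0, _, _ => 1
  | t+1, l, a => B (l 0) * A ^ (a 0) * wordM A B t (l ∘ Fin.succ) (a ∘ Fin.succ)

variable (hA : NN A) (hB : ∀ l, NN (B l))
variable (hc : ∀ l, MLE (B l * A) (A * B l))

include hA hB hc in
lemma push : ∀ (l : Fin k) (m : ℕ), MLE (B l * A ^ m) (A ^ m * B l) := by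
  intro l m
  induction m with
  | zero => simpa using MLE.rfl
  | succ m ih =>
    have h1 : MLE (B l * A ^ (m+1)) (A ^ m * B l * A) := by
      rw [pow_succ, ← mul_assoc]
      exact MLE.mul ((hB l).mul (hA.pow m)) hA ih MLE.rfl
    have h2 : MLE (A ^ m * B l * A) (A ^ (m+1) * B l) := by
      rw [pow_succ, mul_assoc, mul_assoc]
      exact MLE.mul (hA.pow m) ((hB l).mul hA) MLE.rfl (hc l)
    exact h1.trans h2
  

include hA hB in
lemma word_nn : ∀ t (l : Fin t → Fin k) (a : Fin t → ℕ), NN (wordM A B t l a) := by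
  intro t
  induction t with
  | zero => intro l a; exact NN.one
  | succ t ih =>
    intro l a
    exact ((hB (l 0)).mul (hA.pow (a 0))).mul (ih _ _)

include hA hB hc in
lemma pushWord : ∀ t (l : Fin t → Fin k) (a : Fin t → ℕ) (m : ℕ),
    MLE (wordM A B t l a * A ^ m) (A ^ m * wordM A B t l a) := by
  intro t
  induction t with
  | zero => intro l a m; simp [wordM]; exact MLE.rfl
  | succ t ih =>
    intro l a m
    show MLE (B (l 0) * A ^ (a 0) * wordM A B t (l ∘ Fin.succ) (a ∘ Fin.succ) * A ^ m) _
    set W := wordM A B t (l ∘ Fin.succ) (a ∘ Fin.succ) with hW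
    have hWnn : NN W := word_nn A B hA hB t _ _
    calc B (l 0) * A ^ (a 0) * W * A ^ m
        ≼ B (l 0) * A ^ (a 0) * (A ^ m * W) := by
          rw [mul_assoc (B (l 0) * A ^ (a 0)) W (A ^ m)]
          exact MLE.mul ((hB _).mul (hA.pow _)) (hWnn.mul (hA.pow m)) MLE.rfl (ih _ _ m)
      _ = (B (l 0) * A ^ m) * (A ^ (a 0) * W) := by
          rw [← mul_assoc, mul_assoc (B (l 0)) (A ^ (a 0)) (A ^ m), pow_mul_comm,
            ← mul_assoc, mul_assoc]
      _ ≼ (A ^ m * B (l 0)) * (A ^ (a 0) * W) :=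
          MLE.mul ((hB _).mul (hA.pow m)) ((hA.pow _).mul hWnn)
            (push A B hA hB hc (l 0) m) MLE.rfl
      _ = A ^ m * (B (l 0) * A ^ (a 0) * W) := by
          rw [mul_assoc, ← mul_assoc (B (l 0)), ← mul_assoc]

include hA hB hc in
lemma upperW : ∀ t (l : Fin t → Fin k) (a : Fin t → ℕ),
    MLE (wordM A B t l a) (A ^ (∑ u, a u) * wordM A B t l (fun _ => 0)) := by
  intro t
  induction t with
  | zero => intro l a; simp [wordM]; exact MLE.rfl
  | succ t ih =>
    intro l a
    show MLE (B (l 0) * A ^ (a 0) * wordM A B t (l ∘ Fin.succ) (a ∘ Fin.succ)) _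
    have hWnn : NN (wordM A B t (l ∘ Fin.succ) (a ∘ Fin.succ)) := word_nn A B hA hB t _ _
    have hW0nn : NN (wordM A B t (l ∘ Fin.succ) (fun _ => 0)) := word_nn A B hA hB t _ _
    calc B (l 0) * A ^ (a 0) * wordM A B t (l ∘ Fin.succ) (a ∘ Fin.succ)
        ≼ B (l 0) * A ^ (a 0) *
          (A ^ (∑ u, a (Fin.succ u)) * wordM A B t (l ∘ Fin.succ) (fun _ => 0)) :=
          MLE.mul ((hB _).mul (hA.pow _)) hWnn MLE.rfl (ih _ _)
      _ = (B (l 0) * A ^ (a 0 + ∑ u, a (Fin.succ u))) *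
            wordM A B t (l ∘ Fin.succ) (fun _ => 0) := by
          rw [pow_add, mul_assoc, mul_assoc, mul_assoc]
      _ ≼ (A ^ (a 0 + ∑ u, a (Fin.succ u)) * B (l 0)) *
            wordM A B t (l ∘ Fin.succ) (fun _ => 0) :=
          MLE.mul ((hB _).mul (hA.pow _)) hW0nn (push A B hA hB hc _ _) MLE.rfl
      _ = A ^ (∑ u, a u) * wordM A B (t+1) l (fun _ => 0) := by
          show _ = A ^ (∑ u, a u) * (B (l 0) * A ^ 0 * wordM A B t (l ∘ Fin.succ) (fun _ => 0))
          rw [Fin.sum_univ_succ, pow_zero, mul_one, mul_assoc]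

include hA hB hc in
lemma lowerW : ∀ t (l : Fin t → Fin k) (a : Fin t → ℕ),
    MLE (wordM A B t l (fun _ => 0) * A ^ (∑ u, a u)) (wordM A B t l a) := by
  intro t
  induction t with
  | zero => intro l a; simp [wordM]; exact MLE.rfl
  | succ t ih =>
    intro l a
    show MLE (B (l 0) * A ^ 0 * wordM A B t (l ∘ Fin.succ) (fun _ => 0) * A ^ (∑ u, a u)) _
    set W0 := wordM A B t (l ∘ Fin.succ) (fun _ => 0) with hW0
    have hW0nn : NN W0 := word_nn A B hA hB t _ _
    have hWnn : NN (wordM A B t (l ∘ Fin.succ) (a ∘ Fin.succ)) := word_nn A B hA hB t _ _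
    calc B (l 0) * A ^ 0 * W0 * A ^ (∑ u, a u)
        = B (l 0) * (W0 * A ^ (a 0) * A ^ (∑ u, a (Fin.succ u))) := by
          rw [pow_zero, mul_one, Fin.sum_univ_succ, pow_add, mul_assoc, mul_assoc W0]
      _ ≼ B (l 0) * (A ^ (a 0) * W0 * A ^ (∑ u, a (Fin.succ u))) :=
          MLE.mul (hB _) ((hW0nn.mul (hA.pow _)).mul (hA.pow _)) MLE.rfl
            (MLE.mul (hW0nn.mul (hA.pow _)) (hA.pow _)
              (pushWord A B hA hB hc t _ _ (a 0)) MLE.rfl)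
      _ ≼ B (l 0) * (A ^ (a 0) * wordM A B t (l ∘ Fin.succ) (a ∘ Fin.succ)) := by
          rw [mul_assoc (A ^ (a 0)) W0]
          exact MLE.mul (hB _) ((hA.pow _).mul (hW0nn.mul (hA.pow _))) MLE.rfl
            (MLE.mul (hA.pow _) (hW0nn.mul (hA.pow _)) MLE.rfl (ih _ _))
      _ = B (l 0) * A ^ (a 0) * wordM A B t (l ∘ Fin.succ) (a ∘ Fin.succ) := by
          rw [mul_assoc]

lemma traceLE {X Y : Matrix (Fin n) (Fin n) ℝ} (h : MLE X Y) : X.trace ≤ Y.trace := by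
  simp only [Matrix.trace, Matrix.diag]
  exact Finset.sum_le_sum fun i _ => h i i

include hA hB hc in
lemma traceEqR (t : ℕ) (l : Fin t → Fin k) (a : Fin t → ℕ) (a0 : ℕ) :
    (A ^ a0 * wordM A B t l a).trace
      = (A ^ (a0 + ∑ u, a u) * wordM A B t l (fun _ => 0)).trace := by
  have hWnn : NN (wordM A B t l a) := word_nn A B hA hB t _ _
  have hW0nn : NN (wordM A B t l (fun _ => 0)) := word_nn A B hA hB t _ _
  have le1 : (A ^ a0 * wordM A B t l a).trace
      ≤ (A ^ (a0 + ∑ u, a u) * wordM A B t l (fun _ => 0)).trace := by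
    apply traceLE
    have := MLE.mul (hA.pow a0) hWnn (MLE.rfl (X := A ^ a0)) (upperW A B hA hB hc t l a)
    refine this.trans ?_
    rw [pow_add, mul_assoc]
    exact MLE.rfl
  have le2 : (A ^ (a0 + ∑ u, a u) * wordM A B t l (fun _ => 0)).trace
      ≤ (A ^ a0 * wordM A B t l a).trace := by
    have h1 : MLE (A ^ a0 * (wordM A B t l (fun _ => 0) * A ^ (∑ u, a u)))
        (A ^ a0 * wordM A B t l a) :=
      MLE.mul (hA.pow a0) (hW0nn.mul (hA.pow _)) MLE.rfl (lowerW A B hA hB hc t l a)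
    have e : (A ^ a0 * (wordM A B t l (fun _ => 0) * A ^ (∑ u, a u))).trace
        = (A ^ (a0 + ∑ u, a u) * wordM A B t l (fun _ => 0)).trace := by
      rw [Matrix.trace_mul_comm, mul_assoc, ← pow_add, Matrix.trace_mul_comm,
        Nat.add_comm (∑ u, a u) a0]
    rw [← e]
    exact traceLE h1
  exact le_antisymm le1 le2

end Words


section Complexify

lemma trace_map' (X : Matrix (Fin n) (Fin n) ℝ) :
    (X.map (algebraMap ℝ ℂ)).trace = algebraMap ℝ ℂ X.trace := by
  simp [Matrix.trace, Matrix.diag, Matrix.map_apply, map_sum]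

lemma map_wordM (A : Matrix (Fin n) (Fin n) ℝ) (B : Fin k → Matrix (Fin n) (Fin n) ℝ) :
    ∀ (t : ℕ) (l : Fin t → Fin k) (a : Fin t → ℕ),
    (wordM A B t l a).map (algebraMap ℝ ℂ)
      = wordM (A.map (algebraMap ℝ ℂ)) (fun l' => (B l').map (algebraMap ℝ ℂ)) t l a := by
  intro t
  induction t with
  | zero =>
    intro l a
    show ((1 : Matrix (Fin n) (Fin n) ℝ)).map _ = (1 : Matrix (Fin n) (Fin n) ℂ)
    rw [← RingHom.mapMatrix_apply, _root_.map_one]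
  | succ t ih =>
    intro l a
    show (B (l 0) * A ^ (a 0) * wordM A B t (l ∘ Fin.succ) (a ∘ Fin.succ)).map _
      = (B (l 0)).map _ * (A.map _) ^ (a 0) * wordM _ _ t (l ∘ Fin.succ) (a ∘ Fin.succ)
    rw [← RingHom.mapMatrix_apply, _root_.map_mul, _root_.map_mul, _root_.map_pow,
      RingHom.mapMatrix_apply, RingHom.mapMatrix_apply, RingHom.mapMatrix_apply, ih]

end Complexify

section Conj

variable (S Si : Matrix (Fin n) (Fin n) ℂ) (hS : S * Si = 1) (hSi : Si * S = 1)

include hS in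
lemma conj_mul' (X Y : Matrix (Fin n) (Fin n) ℂ) :
    Si * (X * Y) * S = (Si * X * S) * (Si * Y * S) := by
  have h : S * (Si * Y * S) = Y * S := by
    rw [← mul_assoc, ← mul_assoc, hS, one_mul]
  rw [mul_assoc (Si * X) S (Si * Y * S), h, ← mul_assoc, mul_assoc (Si * X) Y S, ← mul_assoc,
    mul_assoc Si X Y, ← mul_assoc]

include hS hSi in
lemma conj_pow' (X : Matrix (Fin n) (Fin n) ℂ) (m : ℕ) :
    Si * X ^ m * S = (Si * X * S) ^ m := by
  induction m with
  | zero => simpa using hSi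
  | succ m ih => rw [pow_succ, pow_succ, ← ih, ← conj_mul' S Si hS]

include hS in
lemma conj_trace' (X : Matrix (Fin n) (Fin n) ℂ) : (Si * X * S).trace = X.trace := by
  rw [Matrix.trace_mul_comm, ← mul_assoc, hS, one_mul]

include hS hSi in
lemma conj_word' (Ac : Matrix (Fin n) (Fin n) ℂ) (Bc : Fin k → Matrix (Fin n) (Fin n) ℂ) :
    ∀ (t : ℕ) (l : Fin t → Fin k) (a : Fin t → ℕ),
    Si * wordM Ac Bc t l a * S
      = wordM (Si * Ac * S) (fun l' => Si * Bc l' * S) t l a := by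
  intro t
  induction t with
  | zero =>
    intro l a
    show Si * 1 * S = (1 : Matrix (Fin n) (Fin n) ℂ)
    rw [mul_one, hSi]
  | succ t ih =>
    intro l a
    show Si * (Bc (l 0) * Ac ^ (a 0) * wordM Ac Bc t (l ∘ Fin.succ) (a ∘ Fin.succ)) * S = _
    rw [conj_mul' S Si hS, conj_mul' S Si hS, ih, conj_pow' S Si hS hSi]
    rfl

end Conj

section Vandermonde

lemma sum_pi_succ (t : ℕ) (F : (Fin (t+1) → Fin n) → ℂ) :
    ∑ τ : Fin (t+1) → Fin n, F τ = ∑ s : Fin n, ∑ ρ : Fin t → Fin n, F (Fin.cons s ρ) := by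
  rw [← (Fin.consEquiv (fun _ : Fin (t+1) => Fin n)).sum_comp F]
  rw [Fintype.sum_prod_type]
  rfl

lemma vdm1 {d : Fin n → ℂ} (hd : Function.Injective d) {x : Fin n → ℂ}
    (h : ∀ m : ℕ, ∑ r, x r * d r ^ m = 0) : ∀ r, x r = 0 := by
  have hz := Matrix.eq_zero_of_forall_pow_sum_mul_pow_eq_zero (f := d) (v := x) hd
    (fun i => h (i : ℕ))
  exact fun r => congrFun hz r

lemma vdmMulti {d : Fin n → ℂ} (hd : Function.Injective d) :
    ∀ (t : ℕ) (g : (Fin t → Fin n) → ℂ),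
      (∀ a : Fin t → ℕ, ∑ ρ : Fin t → Fin n, g ρ * ∏ u, d (ρ u) ^ a u = 0) →
      ∀ ρ, g ρ = 0 := by
  intro t
  induction t with
  | zero =>
    intro g h ρ
    have h0 := h 0
    rw [Fintype.sum_unique] at h0
    simpa [Subsingleton.elim ρ default] using h0
  | succ t ih =>
    intro g h ρ
    have key : ∀ (a' : Fin t → ℕ) (s : Fin n),
        ∑ ρ' : Fin t → Fin n, g (Fin.cons s ρ') * ∏ u, d (ρ' u) ^ a' u = 0 := by
      intro a'
      refine vdm1 hd (x := fun s => ∑ ρ' : Fin t → Fin n, g (Fin.cons s ρ') * ∏ u, d (ρ' u) ^ a' u) ?_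
      intro m
      have hh := h (Fin.cons m a')
      rw [sum_pi_succ] at hh
      rw [← hh]
      refine Finset.sum_congr rfl fun s _ => ?_
      rw [Finset.sum_mul]
      refine Finset.sum_congr rfl fun ρ' _ => ?_
      rw [Fin.prod_univ_succ]
      simp only [Fin.cons_zero, Fin.cons_succ]
      ring
    have hρ : ρ = Fin.cons (ρ 0) (fun u => ρ u.succ) := (Fin.cons_self_tail ρ).symm
    rw [hρ]
    exact ih (fun ρ' => g (Fin.cons (ρ 0) ρ')) (fun a' => key a' (ρ 0)) _

end Vandermonde

section Walk

lemma cons_comp_succ {t : ℕ} {α : Type*} (x : α) (p : Fin t → α) :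
    (Fin.cons x p : Fin (t+1) → α) ∘ Fin.succ = p :=
  funext fun u => by simp

variable (d : Fin n → ℂ) (Bt : Fin k → Matrix (Fin n) (Fin n) ℂ)

/-- product of matrix entries along a walk -/
noncomputable def wCoef (Bt : Fin k → Matrix (Fin n) (Fin n) ℂ) :
    (t : ℕ) → (Fin t → Fin k) → Fin n → Fin n → (Fin t → Fin n) → ℂ
  | 0, _, s, r, _ => if s = r then 1 else 0
  | t+1, l, s, r, ρ => Bt (l 0) s (ρ 0) * wCoef Bt t (l ∘ Fin.succ) (ρ 0) r (ρ ∘ Fin.succ)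

lemma wCoef_succ (t : ℕ) (l : Fin (t+1) → Fin k) (s r : Fin n) (ρ : Fin (t+1) → Fin n) :
    wCoef Bt (t+1) l s r ρ
      = Bt (l 0) s (ρ 0) * wCoef Bt t (l ∘ Fin.succ) (ρ 0) r (ρ ∘ Fin.succ) := rfl

lemma word_diag_apply : ∀ (t : ℕ) (l : Fin t → Fin k) (a : Fin t → ℕ) (s r : Fin n),
    wordM (Matrix.diagonal d) Bt t l a s r
      = ∑ ρ : Fin t → Fin n, wCoef Bt t l s r ρ * ∏ u, d (ρ u) ^ a u := by
  intro t
  induction t with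
  | zero =>
    intro l a s r
    show (1 : Matrix (Fin n) (Fin n) ℂ) s r = _
    rw [Fintype.sum_unique]
    simp [wCoef, Matrix.one_apply]
  | succ t ih =>
    intro l a s r
    show (Bt (l 0) * Matrix.diagonal d ^ (a 0)
        * wordM (Matrix.diagonal d) Bt t (l ∘ Fin.succ) (a ∘ Fin.succ)) s r = _
    rw [Matrix.diagonal_pow, Matrix.mul_apply, sum_pi_succ]
    refine Finset.sum_congr rfl fun r' _ => ?_
    rw [Matrix.mul_diagonal, ih, Finset.mul_sum]
    refine Finset.sum_congr rfl fun ρ' _ => ?_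
    rw [wCoef_succ, Fin.prod_univ_succ]
    simp only [Fin.cons_zero, cons_comp_succ, Fin.cons_succ, Pi.pow_apply,
      Function.comp_apply]
    ring

lemma trace_diag_pow_mul (a0 : ℕ) (X : Matrix (Fin n) (Fin n) ℂ) :
    (Matrix.diagonal d ^ a0 * X).trace = ∑ s, d s ^ a0 * X s s := by
  rw [Matrix.diagonal_pow]
  simp [Matrix.trace, Matrix.diag, Matrix.diagonal_mul]

lemma keyVanish (hd : Function.Injective d)
    (Hid : ∀ (t : ℕ) (l : Fin t → Fin k) (a : Fin t → ℕ) (a0 : ℕ),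
      (Matrix.diagonal d ^ a0 * wordM (Matrix.diagonal d) Bt t l a).trace
        = (Matrix.diagonal d ^ (a0 + ∑ u, a u)
            * wordM (Matrix.diagonal d) Bt t l (fun _ => 0)).trace) :
    ∀ (t : ℕ) (l : Fin t → Fin k) (s : Fin n) (ρ : Fin t → Fin n),
      (∃ u, ρ u ≠ s) → wCoef Bt t l s s ρ = 0 := by
  intro t l s ρ hu
  classical
  set Y : Fin n → ℂ := fun s => ∑ ρ : Fin t → Fin n, wCoef Bt t l s s ρ with hY
  set g : (Fin (t+1) → Fin n) → ℂ := fun τ =>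
    wCoef Bt t l (τ 0) (τ 0) (τ ∘ Fin.succ) - (if ∀ u, τ u = τ 0 then Y (τ 0) else 0) with hg
  have Hg : ∀ a : Fin (t+1) → ℕ, ∑ τ : Fin (t+1) → Fin n, g τ * ∏ u, d (τ u) ^ a u = 0 := by
    intro a
    have h1 := Hid t l (a ∘ Fin.succ) (a 0)
    rw [trace_diag_pow_mul, trace_diag_pow_mul] at h1
    have hL : ∑ τ : Fin (t+1) → Fin n,
        wCoef Bt t l (τ 0) (τ 0) (τ ∘ Fin.succ) * ∏ u, d (τ u) ^ a u
        = ∑ s', d s' ^ (a 0) * (wordM (Matrix.diagonal d) Bt t l (a ∘ Fin.succ)) s' s' := by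
      rw [sum_pi_succ]
      refine Finset.sum_congr rfl fun s' _ => ?_
      rw [word_diag_apply, Finset.mul_sum]
      refine Finset.sum_congr rfl fun ρ' _ => ?_
      rw [Fin.prod_univ_succ, cons_comp_succ, Fin.cons_zero]
      simp only [Fin.cons_succ, Function.comp_apply]
      ring
    have hR : ∑ τ : Fin (t+1) → Fin n,
        (if ∀ u, τ u = τ 0 then Y (τ 0) else 0) * ∏ u, d (τ u) ^ a u
        = ∑ s', d s' ^ (a 0 + ∑ u, (a ∘ Fin.succ) u)
            * (wordM (Matrix.diagonal d) Bt t l (fun _ => 0)) s' s' := by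
      have e1 : ∀ τ : Fin (t+1) → Fin n, (if ∀ u, τ u = τ 0 then Y (τ 0) else 0)
          = ∑ s', if τ = (fun _ => s') then Y s' else 0 := by
        intro τ
        by_cases hτ : ∀ u, τ u = τ 0
        · rw [if_pos hτ]
          rw [Finset.sum_eq_single (τ 0)]
          · rw [if_pos (funext hτ)]
          · intro b _ hb
            rw [if_neg]
            intro he
            exact hb ((congrFun he 0).symm)
          · intro habs
            exact absurd (Finset.mem_univ _) habs
        · rw [if_neg hτ]
          symm
          apply Finset.sum_eq_zero
          intro s' _
          rw [if_neg]
          intro he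
          exact hτ fun u => by rw [congrFun he u, congrFun he 0]
      calc ∑ τ : Fin (t+1) → Fin n, (if ∀ u, τ u = τ 0 then Y (τ 0) else 0) * ∏ u, d (τ u) ^ a u
          = ∑ τ : Fin (t+1) → Fin n, ∑ s',
              (if τ = (fun _ => s') then Y s' * ∏ u, d (τ u) ^ a u else 0) := by
            refine Finset.sum_congr rfl fun τ _ => ?_
            rw [e1 τ, Finset.sum_mul]
            refine Finset.sum_congr rfl fun s' _ => ?_
            rw [ite_mul, zero_mul]
        _ = ∑ s', ∑ τ : Fin (t+1) → Fin n,
              (if τ = (fun _ => s') then Y s' * ∏ u, d (τ u) ^ a u else 0) := Finset.sum_comm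
        _ = ∑ s', Y s' * ∏ u : Fin (t+1), d s' ^ a u := by
            refine Finset.sum_congr rfl fun s' _ => ?_
            rw [Finset.sum_ite_eq' Finset.univ (fun _ => s')
              (fun τ => Y s' * ∏ u, d (τ u) ^ a u)]
            simp
        _ = ∑ s', d s' ^ (a 0 + ∑ u, (a ∘ Fin.succ) u)
              * (wordM (Matrix.diagonal d) Bt t l (fun _ => 0)) s' s' := by
            refine Finset.sum_congr rfl fun s' _ => ?_
            rw [word_diag_apply]
            simp only [pow_zero, Finset.prod_const_one, mul_one]
            rw [show (∑ x : Fin t → Fin n, wCoef Bt t l s' s' x) = Y s' from rfl]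
            rw [Finset.prod_pow_eq_pow_sum]
            rw [Fin.sum_univ_succ (f := a)]
            simp only [Function.comp_apply]
            ring
    have expand : ∑ τ : Fin (t+1) → Fin n, g τ * ∏ u, d (τ u) ^ a u
        = (∑ τ : Fin (t+1) → Fin n,
            wCoef Bt t l (τ 0) (τ 0) (τ ∘ Fin.succ) * ∏ u, d (τ u) ^ a u)
          - ∑ τ : Fin (t+1) → Fin n,
              (if ∀ u, τ u = τ 0 then Y (τ 0) else 0) * ∏ u, d (τ u) ^ a u := by
      rw [← Finset.sum_sub_distrib]
      refine Finset.sum_congr rfl fun τ _ => ?_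
      rw [hg]
      ring
    rw [expand, hL, hR, h1, sub_self]
  have hvan := vdmMulti hd (t+1) g Hg (Fin.cons s ρ)
  rw [hg] at hvan
  simp only [Fin.cons_zero, cons_comp_succ] at hvan
  obtain ⟨u, hu'⟩ := hu
  rw [if_neg] at hvan
  · simpa using hvan
  · intro hconst
    exact hu' (by simpa [Fin.cons_succ] using hconst u.succ)

/-- the digraph on eigen-indices -/
def edgeRel (Bt : Fin k → Matrix (Fin n) (Fin n) ℂ) (r s : Fin n) : Prop :=
  r ≠ s ∧ ∃ l, Bt l r s ≠ 0

lemma exists_walk {s r : Fin n} (h : Relation.TransGen (edgeRel Bt) s r) :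
    ∃ (t : ℕ) (l : Fin (t+1) → Fin k) (ρ : Fin (t+1) → Fin n),
      ρ 0 ≠ s ∧ wCoef Bt (t+1) l s r ρ ≠ 0 := by
  induction h using Relation.TransGen.head_induction_on with
  | @single x h =>
    obtain ⟨hne, l0, hl0⟩ := h
    refine ⟨0, fun _ => l0, fun _ => r, hne.symm, ?_⟩
    have he : wCoef Bt (0+1) (fun _ => l0) x r (fun _ => r) = Bt l0 x r := by
      rw [wCoef_succ]
      simp [wCoef]
    rw [he]
    exact hl0
  | @head x c h1 h2 IH =>
    obtain ⟨t, l, ρ, hρ0, hw⟩ := IH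
    obtain ⟨hne, l0, hl0⟩ := h1
    refine ⟨t+1, Fin.cons l0 l, Fin.cons c ρ, hne.symm, ?_⟩
    have he : wCoef Bt (t+1+1) (Fin.cons l0 l) x r (Fin.cons c ρ)
        = Bt l0 x c * wCoef Bt (t+1) l c r ρ := by
      rw [wCoef_succ]
      rw [cons_comp_succ, cons_comp_succ]
      simp only [Fin.cons_zero]
    rw [he]
    exact mul_ne_zero hl0 hw

lemma no_cycle (hd : Function.Injective d)
    (Hid : ∀ (t : ℕ) (l : Fin t → Fin k) (a : Fin t → ℕ) (a0 : ℕ),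
      (Matrix.diagonal d ^ a0 * wordM (Matrix.diagonal d) Bt t l a).trace
        = (Matrix.diagonal d ^ (a0 + ∑ u, a u)
            * wordM (Matrix.diagonal d) Bt t l (fun _ => 0)).trace) :
    ∀ v : Fin n, ¬ Relation.TransGen (edgeRel Bt) v v := by
  intro v h
  obtain ⟨t, l, ρ, hρ0, hw⟩ := exists_walk Bt h
  exact hw (keyVanish d Bt hd Hid (t+1) l v ρ ⟨0, hρ0⟩)

end Walk

section Diag

lemma charpoly_eval_eq_det (M : Matrix (Fin n) (Fin n) ℂ) (μ : ℂ) :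
    M.charpoly.eval μ = (Matrix.diagonal (fun _ => μ) - M).det := by
  rw [Matrix.charpoly, ← Polynomial.coe_evalRingHom, RingHom.map_det]
  congr 1
  ext i j
  by_cases h : i = j
  · subst h
    simp [Matrix.charmatrix_apply_eq, Matrix.sub_apply, RingHom.mapMatrix_apply,
      Matrix.map_apply]
  · simp [Matrix.charmatrix_apply_ne _ _ _ h, Matrix.sub_apply,
      Matrix.diagonal_apply_ne _ h, RingHom.mapMatrix_apply, Matrix.map_apply]

lemma eigenvector_of_root (M : Matrix (Fin n) (Fin n) ℂ) (μ : ℂ)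
    (h : M.charpoly.eval μ = 0) : ∃ v : Fin n → ℂ, v ≠ 0 ∧ M *ᵥ v = μ • v := by
  rw [charpoly_eval_eq_det] at h
  obtain ⟨v, hv0, hv⟩ := (Matrix.exists_mulVec_eq_zero_iff).mpr h
  refine ⟨v, hv0, ?_⟩
  rw [Matrix.sub_mulVec] at hv
  have h2 : Matrix.diagonal (fun _ => μ) *ᵥ v = μ • v := by
    ext i
    rw [Matrix.mulVec_diagonal]
    rfl
  have := sub_eq_zero.mp hv
  rw [h2] at this
  exact this.symm

end Diag

theorem stmt_18' (n k : ℕ) (A : Matrix (Fin n) (Fin n) ℝ)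
    (B : Fin k → Matrix (Fin n) (Fin n) ℝ)
    (hApos : ∀ i j, 0 ≤ A i j) (hBpos : ∀ l i j, 0 ≤ B l i j)
    (hdist : ((A.map (algebraMap ℝ ℂ)).charpoly.roots).toFinset.card = n)
    (hcomm : ∀ l i j, ((B l) * A) i j ≤ (A * (B l)) i j) :
    ∃ T : Matrix (Fin n) (Fin n) ℂ, IsUnit T ∧
      (∀ i j : Fin n, j < i → (T⁻¹ * A.map (algebraMap ℝ ℂ) * T) i j = 0) ∧
      ∀ l : Fin k, ∀ i j : Fin n, j < i →
        (T⁻¹ * (B l).map (algebraMap ℝ ℂ) * T) i j = 0 := by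
  classical
  rcases Nat.eq_zero_or_pos n with hn | hn
  · subst hn
    exact ⟨1, isUnit_one, fun i => i.elim0, fun l i => i.elim0⟩
  haveI : Nonempty (Fin n) := ⟨⟨0, hn⟩⟩
  set Ac := A.map (algebraMap ℝ ℂ) with hAc
  set Bc : Fin k → Matrix (Fin n) (Fin n) ℂ := fun l => (B l).map (algebraMap ℝ ℂ) with hBc
  set F := Ac.charpoly.roots.toFinset with hF
  have hFcard : F.card = n := hdist
  set e := F.equivFin with he
  set d : Fin n → ℂ := fun r => (e.symm (Fin.cast hFcard.symm r) : ℂ) with hd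
  have hdinj : Function.Injective d := by
    intro a b hab
    have h1 : e.symm (Fin.cast hFcard.symm a) = e.symm (Fin.cast hFcard.symm b) :=
      Subtype.ext hab
    have h2 := e.symm.injective h1
    simpa [Fin.ext_iff] using congrArg Fin.val h2
  have hdroot : ∀ r, Ac.charpoly.eval (d r) = 0 := by
    intro r
    have hm : d r ∈ Ac.charpoly.roots := Multiset.mem_toFinset.mp (e.symm _).2
    exact Polynomial.isRoot_of_mem_roots hm
  choose v hv0 hvec using fun r => eigenvector_of_root Ac (d r) (hdroot r)
  have hli : LinearIndependent ℂ v := by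
    apply Module.End.eigenvectors_linearIndependent' (Matrix.mulVecLin Ac) d hdinj v
    intro r
    refine ⟨Module.End.mem_eigenspace_iff.mpr ?_, hv0 r⟩
    rw [Matrix.mulVecLin_apply]
    exact hvec r
  set c := basisOfLinearIndependentOfCardEqFinrank hli
    (by rw [Module.finrank_fintype_fun_eq_card]) with hc
  set S := (Pi.basisFun ℂ (Fin n)).toMatrix ⇑c with hS
  have hSe : ∀ i j, S i j = v j i := by
    intro i j
    rw [hS, Module.Basis.toMatrix_apply, Pi.basisFun_repr, hc,
      coe_basisOfLinearIndependentOfCardEqFinrank]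
  haveI : Invertible S := (Pi.basisFun ℂ (Fin n)).invertibleToMatrix c
  have hUnit : IsUnit S := isUnit_of_invertible S
  have hdet : IsUnit S.det := (Matrix.isUnit_iff_isUnit_det S).mp hUnit
  set SI := S⁻¹ with hSI
  have hS1 : S * SI = 1 := Matrix.mul_nonsing_inv S hdet
  have hS2 : SI * S = 1 := Matrix.nonsing_inv_mul S hdet
  have hAS : Ac * S = S * Matrix.diagonal d := by
    ext i j
    rw [Matrix.mul_apply, Matrix.mul_diagonal]
    have h3 : ∑ m, Ac i m * S m j = (Ac *ᵥ v j) i := by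
      simp [Matrix.mulVec, dotProduct, hSe]
    rw [h3, hvec j, hSe]
    simp only [Pi.smul_apply, smul_eq_mul]
    ring
  have hD : SI * Ac * S = Matrix.diagonal d := by
    rw [mul_assoc, hAS, ← mul_assoc, hS2, one_mul]
  set Bt : Fin k → Matrix (Fin n) (Fin n) ℂ := fun l => SI * Bc l * S with hBt
  have hNNA : NN A := hApos
  have hNNB : ∀ l, NN (B l) := hBpos
  have hMLEc : ∀ l, MLE (B l * A) (A * B l) := hcomm
  have traceC : ∀ (t : ℕ) (l : Fin t → Fin k) (a : Fin t → ℕ) (a0 : ℕ),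
      (Ac ^ a0 * wordM Ac Bc t l a).trace
        = algebraMap ℝ ℂ ((A ^ a0 * wordM A B t l a).trace) := by
    intro t l a a0
    have h4 : (A ^ a0 * wordM A B t l a).map (algebraMap ℝ ℂ)
        = Ac ^ a0 * wordM Ac Bc t l a := by
      rw [← RingHom.mapMatrix_apply, _root_.map_mul, _root_.map_pow,
        RingHom.mapMatrix_apply, RingHom.mapMatrix_apply, map_wordM]
    rw [← h4, trace_map']
  have Hid : ∀ (t : ℕ) (l : Fin t → Fin k) (a : Fin t → ℕ) (a0 : ℕ),
      (Matrix.diagonal d ^ a0 * wordM (Matrix.diagonal d) Bt t l a).trace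
        = (Matrix.diagonal d ^ (a0 + ∑ u, a u)
            * wordM (Matrix.diagonal d) Bt t l (fun _ => 0)).trace := by
    intro t l a a0
    have hW : ∀ (a' : Fin t → ℕ),
        wordM (Matrix.diagonal d) Bt t l a' = SI * wordM Ac Bc t l a' * S := by
      intro a'
      rw [conj_word' S SI hS1 hS2 Ac Bc t l a', hD]
    have hP : ∀ m : ℕ, Matrix.diagonal d ^ m = SI * Ac ^ m * S := by
      intro m
      rw [conj_pow' S SI hS1 hS2, hD]
    rw [hW a, hW (fun _ => 0), hP a0, hP (a0 + ∑ u, a u)]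
    rw [← conj_mul' S SI hS1, ← conj_mul' S SI hS1]
    rw [conj_trace' S SI hS1, conj_trace' S SI hS1]
    rw [traceC, traceC]
    exact congrArg _ (traceEqR A B hNNA hNNB hMLEc t l a a0)
  have hnc : ∀ v0 : Fin n, ¬ Relation.TransGen (edgeRel Bt) v0 v0 :=
    no_cycle d Bt hdinj Hid
  set f : Fin n → ℕ := fun v0 => {x | Relation.ReflTransGen (edgeRel Bt) x v0}.ncard with hf
  have hmono : ∀ r s', edgeRel Bt r s' → f r < f s' := by
    intro r s' hrs
    have hsub : {x | Relation.ReflTransGen (edgeRel Bt) x r}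
        ⊆ {x | Relation.ReflTransGen (edgeRel Bt) x s'} :=
      fun x hx => Relation.ReflTransGen.tail hx hrs
    have hns : ¬ ({x | Relation.ReflTransGen (edgeRel Bt) x s'}
        ⊆ {x | Relation.ReflTransGen (edgeRel Bt) x r}) := by
      intro hsub2
      exact hnc s' (Relation.TransGen.tail' (hsub2 Relation.ReflTransGen.refl) hrs)
    exact Set.ncard_lt_ncard (ssubset_iff_subset_not_subset.mpr ⟨hsub, hns⟩) (Set.toFinite _)
  set σ := Tuple.sort f with hσ
  have hmonoσ : Monotone (f ∘ σ) := Tuple.monotone_sort f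
  set T := S.submatrix id σ with hT
  set Ti := SI.submatrix σ id with hTi
  have hT1 : T * Ti = 1 := by
    ext i j
    have h1 : (T * Ti) i j = (S * SI) i j := by
      rw [Matrix.mul_apply, Matrix.mul_apply]
      exact Equiv.sum_comp σ (fun b => S i b * SI b j)
    rw [h1, hS1]
  have hT2 : Ti * T = 1 := by
    ext i j
    have h1 : (Ti * T) i j = (SI * S) (σ i) (σ j) := by
      rw [Matrix.mul_apply, Matrix.mul_apply]
      rfl
    rw [h1, hS2]
    by_cases hij : i = j
    · subst hij
      simp [Matrix.one_apply]
    · rw [Matrix.one_apply_ne (σ.injective.ne hij), Matrix.one_apply_ne hij]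
  have hUnitT : IsUnit T := ⟨⟨T, Ti, hT1, hT2⟩, rfl⟩
  have hTinv : T⁻¹ = Ti := Matrix.inv_eq_right_inv hT1
  have hconjT : ∀ (X : Matrix (Fin n) (Fin n) ℂ) (i j : Fin n),
      (T⁻¹ * X * T) i j = (SI * X * S) (σ i) (σ j) := by
    intro X i j
    rw [hTinv]
    show (Ti * X * T) i j = _
    simp only [Matrix.mul_apply, hT, hTi, Matrix.submatrix_apply, id_eq]
  refine ⟨T, hUnitT, ?_, ?_⟩
  · intro i j hij
    rw [hconjT, hD, Matrix.diagonal_apply_ne _ (σ.injective.ne (ne_of_gt hij))]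
  · intro l i j hij
    by_contra hne
    have hBne : Bt l (σ i) (σ j) ≠ 0 := by
      rw [hBt]
      intro h0
      exact hne (by rw [hconjT]; exact h0)
    have hedge : edgeRel Bt (σ i) (σ j) := ⟨σ.injective.ne (ne_of_gt hij), l, hBne⟩
    have h5 := hmono _ _ hedge
    have h6 : f (σ j) ≤ f (σ i) := hmonoσ (le_of_lt hij)
    omega


end Stmt18


theorem stmt_18 (n k : ℕ) (A : Matrix (Fin n) (Fin n) ℝ)
    (B : Fin k → Matrix (Fin n) (Fin n) ℝ)
    (hApos : ∀ i j, 0 ≤ A i j) (hBpos : ∀ l i j, 0 ≤ B l i j)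
    (hdist : ((A.map (algebraMap ℝ ℂ)).charpoly.roots).toFinset.card = n)
    (hcomm : ∀ l i j, ((B l) * A) i j ≤ (A * (B l)) i j) :
    ∃ T : Matrix (Fin n) (Fin n) ℂ, IsUnit T ∧
      (∀ i j : Fin n, j < i → (T⁻¹ * A.map (algebraMap ℝ ℂ) * T) i j = 0) ∧
      ∀ l : Fin k, ∀ i j : Fin n, j < i →
        (T⁻¹ * (B l).map (algebraMap ℝ ℂ) * T) i j = 0 :=
  Stmt18.stmt_18' n k A B hApos hBpos hdist hcomm
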